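/- Let f be a finite measurable function on (X, 𝒳, μ, T) and let q be a fixed integer. If limsup_n (1/n)|f∘T^{-n} − f∘T^{n+q}| < +∞ almost everywhere on a set of positive measure, then (1/n) f∘T^n converges to 0 μ-almost everywhere on X. -/

import Mathlib

open MeasureTheory Filter Topology

section Birkhoff

variable {X : Type*} [MeasurableSpace X] {μ : Measure X} [IsProbabilityMeasure μ]

noncomputable def bS (φ : X → X) (g : X → ℝ) : ℕ → X → ℝ :=
  fun n x => ∑ k ∈ Finset.range n, g (φ^[k] x)

noncomputable def bM (φ : X → X) (g : X → ℝ) : ℕ → X → ℝ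
  | 0 => fun _ => 0
  | (N+1) => fun x => max 0 (g x + bM φ g N (φ x))

omit [MeasurableSpace X] in
lemma bS_zero (φ : X → X) (g : X → ℝ) (x : X) : bS φ g 0 x = 0 := by simp [bS]

omit [MeasurableSpace X] in
lemma bS_succ' (φ : X → X) (g : X → ℝ) (n : ℕ) (x : X) :
    bS φ g (n+1) x = g x + bS φ g n (φ x) := by
  rw [bS, Finset.sum_range_succ']
  simp only [Function.iterate_succ_apply, Function.iterate_zero_apply]
  rw [add_comm]
  rfl

omit [MeasurableSpace X] in
lemma bM_nonneg (φ : X → X) (g : X → ℝ) (N : ℕ) (x : X) : 0 ≤ bM φ g N x := by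
  cases N with
  | zero => simp [bM]
  | succ N => exact le_max_left _ _

omit [MeasurableSpace X] in
lemma bM_mono (φ : X → X) (g : X → ℝ) : ∀ N x, bM φ g N x ≤ bM φ g (N+1) x := by
  intro N
  induction N with
  | zero => intro x; exact bM_nonneg _ _ _ _
  | succ N ih =>
      intro x
      show max 0 (g x + bM φ g N (φ x)) ≤ max 0 (g x + bM φ g (N+1) (φ x))
      exact max_le_max le_rfl (add_le_add_right (ih (φ x)) _)

lemma bM_meas {φ : X → X} (hφ : Measurable φ) {g : X → ℝ} (hg : Measurable g) (N : ℕ) :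
    Measurable (bM φ g N) := by
  induction N with
  | zero => simpa [bM] using measurable_const
  | succ N ih =>
      simp only [bM]
      exact (measurable_const.max (hg.add (ih.comp hφ)))

lemma bS_meas {φ : X → X} (hφ : Measurable φ) {g : X → ℝ} (hg : Measurable g) (n : ℕ) :
    Measurable (bS φ g n) := by
  apply Finset.measurable_sum
  intro k _
  exact hg.comp (hφ.iterate k)

omit [MeasurableSpace X] in
lemma bM_le_bound (φ : X → X) {g : X → ℝ} {C : ℝ} (hC : ∀ x, |g x| ≤ C) :
    ∀ (N : ℕ) (x : X), bM φ g N x ≤ N * C := by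
  intro N
  induction N with
  | zero => intro x; simp [bM]
  | succ N ih =>
      intro x
      simp only [bM]
      have hCpos : 0 ≤ C := le_trans (abs_nonneg _) (hC x)
      have h1 : g x ≤ C := le_trans (le_abs_self _) (hC x)
      refine max_le (by positivity) ?_
      have := ih (φ x)
      push_cast
      nlinarith

omit [MeasurableSpace X] in
lemma bM_pos_exists (φ : X → X) (g : X → ℝ) :
    ∀ N x, 0 < bM φ g N x → ∃ n, 1 ≤ n ∧ bM φ g N x ≤ bS φ g n x := by
  intro N
  induction N with
  | zero => intro x h; simp [bM] at h
  | succ N ih =>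
      intro x h
      have hx : bM φ g (N+1) x = g x + bM φ g N (φ x) := by
        simp only [bM] at h ⊢
        rcases max_cases (0:ℝ) (g x + bM φ g N (φ x)) with ⟨h1, h2⟩ | ⟨h1, h2⟩
        · rw [h1] at h; linarith
        · exact h1
      rcases lt_or_ge 0 (bM φ g N (φ x)) with hpos | hle
      · obtain ⟨n, hn1, hn⟩ := ih (φ x) hpos
        exact ⟨n+1, by omega, by rw [bS_succ']; linarith [hx]⟩
      · have : bM φ g N (φ x) = 0 := le_antisymm hle (bM_nonneg _ _ _ _)
        refine ⟨1, le_rfl, ?_⟩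
        rw [bS_succ', bS_zero]
        rw [hx, this]

omit [MeasurableSpace X] in
lemma bS_le_bM (φ : X → X) (g : X → ℝ) : ∀ n x, bS φ g (n+1) x ≤ bM φ g (n+1) x := by
  intro n
  induction n with
  | zero =>
      intro x
      rw [bS_succ', bS_zero]
      exact le_max_right _ _
  | succ n ih =>
      intro x
      rw [bS_succ']
      calc g x + bS φ g (n+1) (φ x) ≤ g x + bM φ g (n+1) (φ x) :=
            add_le_add_right (ih (φ x)) _
        _ ≤ max 0 (g x + bM φ g (n+1) (φ x)) := le_max_right _ _

theorem maximal_ergodic (e : X ≃ᵐ X) (hpres : MeasurePreserving (⇑e) μ μ)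
    {g : X → ℝ} (hg : Measurable g) {C : ℝ} (hC : ∀ x, |g x| ≤ C) :
    0 ≤ ∫ x in {x | ∃ n, 0 < bS (⇑e) g n x}, g x ∂μ := by
  have hgint : Integrable g μ :=
    (integrable_const C).mono' hg.aestronglyMeasurable (Eventually.of_forall hC)
  have hbMint : ∀ N, Integrable (bM (⇑e) g N) μ := by
    intro N
    refine (integrable_const ((N:ℝ) * C)).mono'
      (bM_meas e.measurable hg N).aestronglyMeasurable (Eventually.of_forall fun x => ?_)
    rw [Real.norm_eq_abs, abs_of_nonneg (bM_nonneg _ _ _ _)]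
    exact bM_le_bound _ hC N x
  set E : ℕ → Set X := fun N => {x | 0 < bM (⇑e) g N x} with hE
  have hEmeas : ∀ N, MeasurableSet (E N) := fun N =>
    measurableSet_lt measurable_const (bM_meas e.measurable hg N)
  have hcomp : ∀ N, Integrable (fun x => bM (⇑e) g N (e x)) μ := by
    intro N
    exact (hpres.integrable_comp_emb e.measurableEmbedding).2 (hbMint N)
  have key : ∀ N, 0 ≤ ∫ x in E (N+1), g x ∂μ := by
    intro N
    have heqE : ∀ x ∈ E (N+1), bM (⇑e) g (N+1) x = g x + bM (⇑e) g N (e x) := by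
      intro x hx
      have hx' : (0:ℝ) < max 0 (g x + bM (⇑e) g N (e x)) := hx
      rcases max_cases (0:ℝ) (g x + bM (⇑e) g N (e x)) with ⟨h1, h2⟩ | ⟨h1, h2⟩
      · exfalso; rw [h1] at hx'; exact lt_irrefl _ hx'
      · exact h1
    have hsub : Integrable (fun x => bM (⇑e) g (N+1) x - bM (⇑e) g N (e x)) μ :=
      (hbMint (N+1)).sub (hcomp N)
    have step1 : ∫ x in E (N+1), g x ∂μ
        = ∫ x in E (N+1), (bM (⇑e) g (N+1) x - bM (⇑e) g N (e x)) ∂μ := by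
      refine setIntegral_congr_fun (hEmeas (N+1)) fun x hx => ?_
      have := heqE x hx
      linarith
    have step2 : ∫ x, (bM (⇑e) g (N+1) x - bM (⇑e) g N (e x)) ∂μ
        ≤ ∫ x in E (N+1), (bM (⇑e) g (N+1) x - bM (⇑e) g N (e x)) ∂μ := by
      rw [← integral_add_compl (hEmeas (N+1)) hsub]
      have : ∫ x in (E (N+1))ᶜ, (bM (⇑e) g (N+1) x - bM (⇑e) g N (e x)) ∂μ ≤ 0 := by
        refine setIntegral_nonpos (hEmeas (N+1)).compl fun x hx => ?_
        have h0 : bM (⇑e) g (N+1) x ≤ 0 := not_lt.mp hx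
        have h1 : bM (⇑e) g (N+1) x = 0 := le_antisymm h0 (bM_nonneg _ _ _ _)
        have h2 : 0 ≤ bM (⇑e) g N (e x) := bM_nonneg _ _ _ _
        linarith
      linarith
    have step3 : 0 ≤ ∫ x, (bM (⇑e) g (N+1) x - bM (⇑e) g N (e x)) ∂μ := by
      rw [integral_sub (hbMint (N+1)) (hcomp N)]
      have hco : ∫ x, bM (⇑e) g N (e x) ∂μ = ∫ x, bM (⇑e) g N x ∂μ :=
        hpres.integral_comp' _
      rw [hco]
      have : ∫ x, bM (⇑e) g N x ∂μ ≤ ∫ x, bM (⇑e) g (N+1) x ∂μ :=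
        integral_mono (hbMint N) (hbMint (N+1)) (fun x => bM_mono _ _ N x)
      linarith
    rw [step1]
    linarith
  have hUnion : (⋃ N, E (N+1)) = {x | ∃ n, 0 < bS (⇑e) g n x} := by
    ext x
    simp only [Set.mem_iUnion, Set.mem_setOf_eq, hE]
    constructor
    · rintro ⟨N, hN⟩
      obtain ⟨n, _, hn⟩ := bM_pos_exists (⇑e) g (N+1) x hN
      exact ⟨n, lt_of_lt_of_le hN hn⟩
    · rintro ⟨n, hn⟩
      cases n with
      | zero => rw [bS_zero] at hn; exact absurd hn (lt_irrefl 0)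
      | succ m => exact ⟨m, lt_of_lt_of_le hn (bS_le_bM _ _ m x)⟩
  have hmono : Monotone fun N => E (N+1) := by
    intro a b hab
    have : ∀ k, E (k+1) ⊆ E (k+2) := fun k x hx => lt_of_lt_of_le hx (bM_mono _ _ (k+1) x)
    intro x hx
    induction hab with
    | refl => exact hx
    | step _ ih => exact this _ ih
  have htend := tendsto_setIntegral_of_monotone (fun N => hEmeas (N+1)) hmono
    (hgint.integrableOn (s := ⋃ N, E (N+1)))
  rw [hUnion] at htend
  exact ge_of_tendsto' htend key
omit [MeasurableSpace X] in
lemma bS_abs_le (φ : X → X) {g : X → ℝ} {C : ℝ} (hC : ∀ x, |g x| ≤ C) (n : ℕ) (x : X) :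
    |bS φ g n x| ≤ n * C := by
  calc |bS φ g n x| ≤ ∑ k ∈ Finset.range n, |g (φ^[k] x)| := Finset.abs_sum_le_sum_abs _ _
    _ ≤ ∑ _k ∈ Finset.range n, C := Finset.sum_le_sum fun k _ => hC _
    _ = n * C := by simp [mul_comm]

omit [MeasurableSpace X] in
lemma bS_sub_const (φ : X → X) (g : X → ℝ) (c : ℝ) (n : ℕ) (x : X) :
    bS φ (fun y => g y - c) n x = bS φ g n x - n * c := by
  simp [bS, Finset.sum_sub_distrib, mul_comm]

omit [MeasurableSpace X] in
lemma bS_const_sub (φ : X → X) (g : X → ℝ) (c : ℝ) (n : ℕ) (x : X) :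
    bS φ (fun y => c - g y) n x = n * c - bS φ g n x := by
  simp [bS, Finset.sum_sub_distrib, mul_comm]

section LimsupAux

lemma isBdd_le {u : ℕ → ℝ} {C : ℝ} (h : ∀ n, |u n| ≤ C) :
    IsBoundedUnder (· ≤ ·) atTop u := isBoundedUnder_of ⟨C, fun n => (abs_le.mp (h n)).2⟩

lemma isBdd_ge {u : ℕ → ℝ} {C : ℝ} (h : ∀ n, |u n| ≤ C) :
    IsBoundedUnder (· ≥ ·) atTop u := isBoundedUnder_of ⟨-C, fun n => (abs_le.mp (h n)).1⟩

lemma limsup_le_limsup_of_sub {u v : ℕ → ℝ} {C : ℝ} (hu : ∀ n, |u n| ≤ C) (hv : ∀ n, |v n| ≤ C)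
    (h : Tendsto (fun n => u n - v n) atTop (𝓝 0)) :
    limsup u atTop ≤ limsup v atTop := by
  refine le_of_forall_pos_le_add fun ε hε => ?_
  have h1 : ∀ᶠ n in atTop, v n < limsup v atTop + ε/2 :=
    eventually_lt_of_limsup_lt (by linarith) (isBdd_le hv)
  have h2 : ∀ᶠ n in atTop, |u n - v n| < ε/2 := by
    have := (Metric.tendsto_nhds.mp h) (ε/2) (by linarith)
    simpa [Real.dist_eq] using this
  refine limsup_le_of_le ((isBdd_ge hu).isCoboundedUnder_le) ?_
  filter_upwards [h1, h2] with n h1n h2n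
  have := abs_lt.mp h2n
  linarith

lemma limsup_eq_limsup_of_sub {u v : ℕ → ℝ} {C : ℝ} (hu : ∀ n, |u n| ≤ C) (hv : ∀ n, |v n| ≤ C)
    (h : Tendsto (fun n => u n - v n) atTop (𝓝 0)) :
    limsup u atTop = limsup v atTop := by
  refine le_antisymm (limsup_le_limsup_of_sub hu hv h) (limsup_le_limsup_of_sub hv hu ?_)
  have := h.neg
  simpa using this

lemma liminf_le_liminf_of_sub {u v : ℕ → ℝ} {C : ℝ} (hu : ∀ n, |u n| ≤ C) (hv : ∀ n, |v n| ≤ C)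
    (h : Tendsto (fun n => u n - v n) atTop (𝓝 0)) :
    liminf u atTop ≤ liminf v atTop := by
  have key : ∀ ε > (0:ℝ), liminf u atTop ≤ liminf v atTop + ε := by
    intro ε hε
    have h1 : ∀ᶠ n in atTop, liminf u atTop - ε/2 < u n := by
      have := eventually_lt_of_lt_liminf (show liminf u atTop - ε/2 < liminf u atTop by linarith)
        (isBdd_ge hu)
      exact this
    have h2 : ∀ᶠ n in atTop, |u n - v n| < ε/2 := by
      have := (Metric.tendsto_nhds.mp h) (ε/2) (by linarith)
      simpa [Real.dist_eq] using this
    have h3 : ∀ᶠ n in atTop, liminf u atTop - ε ≤ v n := by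
      filter_upwards [h1, h2] with n h1n h2n
      have := abs_lt.mp h2n
      linarith
    have := le_liminf_of_le ((isBdd_le hv).isCoboundedUnder_ge) h3
    linarith
  by_contra hcon
  push_neg at hcon
  have := key ((liminf u atTop - liminf v atTop)/2) (by linarith)
  linarith

lemma liminf_eq_liminf_of_sub {u v : ℕ → ℝ} {C : ℝ} (hu : ∀ n, |u n| ≤ C) (hv : ∀ n, |v n| ≤ C)
    (h : Tendsto (fun n => u n - v n) atTop (𝓝 0)) :
    liminf u atTop = liminf v atTop := by
  refine le_antisymm (liminf_le_liminf_of_sub hu hv h) (liminf_le_liminf_of_sub hv hu ?_)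
  have := h.neg
  simpa using this

end LimsupAux
theorem birkhoff_bdd (e : X ≃ᵐ X) (hpres : MeasurePreserving (⇑e) μ μ)
    (herg : Ergodic (⇑e) μ)
    {g : X → ℝ} (hg : Measurable g) {C : ℝ} (hC : ∀ x, |g x| ≤ C) :
    ∀ᵐ x ∂μ, Tendsto (fun n : ℕ => bS (⇑e) g n x / n) atTop (𝓝 (∫ x, g x ∂μ)) := by
  have hne : Nonempty X := by
    by_contra h
    rw [not_nonempty_iff] at h
    have h1 : μ Set.univ = 1 := measure_univ
    rw [Set.univ_eq_empty_iff.mpr h, measure_empty] at h1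
    exact zero_ne_one h1
  have hC0 : 0 ≤ C := hne.elim fun x => le_trans (abs_nonneg _) (hC x)
  have hgint : Integrable g μ :=
    (integrable_const C).mono' hg.aestronglyMeasurable (Eventually.of_forall hC)
  set I := ∫ x, g x ∂μ with hI
  have hub : ∀ x (n : ℕ), |bS (⇑e) g n x / n| ≤ C := by
    intro x n
    rcases Nat.eq_zero_or_pos n with rfl | hn
    · simp [bS_zero, hC0]
    · have hnpos : (0:ℝ) < n := by exact_mod_cast hn
      rw [abs_div, abs_of_nonneg (le_of_lt hnpos), div_le_iff₀ hnpos]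
      calc |bS (⇑e) g n x| ≤ n * C := bS_abs_le _ hC n x
        _ = C * n := mul_comm _ _
  have humeas : ∀ n : ℕ, Measurable (fun x => bS (⇑e) g n x / (n:ℝ)) := fun n =>
    (bS_meas e.measurable hg n).div_const _
  set L : X → ℝ := fun x => limsup (fun n : ℕ => bS (⇑e) g n x / n) atTop with hL
  set l : X → ℝ := fun x => liminf (fun n : ℕ => bS (⇑e) g n x / n) atTop with hl
  have hLmeas : Measurable L := Measurable.limsup humeas
  have hlmeas : Measurable l := Measurable.liminf humeas
  have hsub : ∀ x, Tendsto
      (fun n : ℕ => bS (⇑e) g n (e x) / n - bS (⇑e) g (n+1) x / ((n:ℝ)+1)) atTop (𝓝 0) := by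
    intro x
    have heq : ∀ n : ℕ, 1 ≤ n →
        ‖bS (⇑e) g n (e x) / n - bS (⇑e) g (n+1) x / ((n:ℝ)+1)‖ ≤ (C + |g x|) / n := by
      intro n hn
      have hnpos : (0:ℝ) < n := by exact_mod_cast hn
      have hbs : bS (⇑e) g n (e x) = bS (⇑e) g (n+1) x - g x := by rw [bS_succ']; ring
      have hval : bS (⇑e) g n (e x) / n - bS (⇑e) g (n+1) x / ((n:ℝ)+1)
          = bS (⇑e) g (n+1) x / ((n:ℝ) * ((n:ℝ)+1)) - g x / n := by
        rw [hbs]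
        field_simp
        ring
      rw [Real.norm_eq_abs, hval]
      have h1 : |bS (⇑e) g (n+1) x / ((n:ℝ) * ((n:ℝ)+1))| ≤ C / n := by
        rw [abs_div, abs_of_nonneg (by positivity : (0:ℝ) ≤ (n:ℝ) * ((n:ℝ)+1)),
          div_le_div_iff₀ (by positivity) hnpos]
        have hS := bS_abs_le (⇑e) hC (n+1) x
        push_cast at hS
        nlinarith [abs_nonneg (bS (⇑e) g (n+1) x)]
      have h2 : |g x / (n:ℝ)| ≤ |g x| / n := by
        rw [abs_div, abs_of_nonneg (le_of_lt hnpos)]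
      calc |bS (⇑e) g (n+1) x / ((n:ℝ) * ((n:ℝ)+1)) - g x / n|
          ≤ |bS (⇑e) g (n+1) x / ((n:ℝ) * ((n:ℝ)+1))| + |g x / n| := abs_sub _ _
        _ ≤ C / n + |g x| / n := add_le_add h1 h2
        _ = (C + |g x|) / n := (add_div _ _ _).symm
    exact squeeze_zero_norm' (eventually_atTop.mpr ⟨1, heq⟩)
      (tendsto_const_div_atTop_nhds_zero_nat (C + |g x|))
  have hcast : ∀ x, (fun n : ℕ => bS (⇑e) g (n+1) x / ((n:ℝ)+1))
      = (fun n : ℕ => bS (⇑e) g (n+1) x / ((n+1 : ℕ):ℝ)) := by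
    intro x; funext n; push_cast; ring_nf
  have hLinv : ∀ x, L (e x) = L x := by
    intro x
    have e1 : limsup (fun n : ℕ => bS (⇑e) g n (e x) / n) atTop
        = limsup (fun n : ℕ => bS (⇑e) g (n+1) x / ((n:ℝ)+1)) atTop := by
      refine limsup_eq_limsup_of_sub (C := C) (hub (e x)) ?_ (hsub x)
      intro n
      have := hub x (n+1)
      push_cast at this
      exact this
    have e2 : limsup (fun n : ℕ => bS (⇑e) g (n+1) x / ((n+1 : ℕ):ℝ)) atTop = L x :=
      limsup_nat_add (fun n : ℕ => bS (⇑e) g n x / n) 1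
    rw [hL]
    simp only []
    rw [e1, hcast x, e2]
  have hlinv : ∀ x, l (e x) = l x := by
    intro x
    have e1 : liminf (fun n : ℕ => bS (⇑e) g n (e x) / n) atTop
        = liminf (fun n : ℕ => bS (⇑e) g (n+1) x / ((n:ℝ)+1)) atTop := by
      refine liminf_eq_liminf_of_sub (C := C) (hub (e x)) ?_ (hsub x)
      intro n
      have := hub x (n+1)
      push_cast at this
      exact this
    have e2 : liminf (fun n : ℕ => bS (⇑e) g (n+1) x / ((n+1 : ℕ):ℝ)) atTop = l x :=
      liminf_nat_add (fun n : ℕ => bS (⇑e) g n x / n) 1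
    rw [hl]
    simp only []
    rw [e1, hcast x, e2]
  obtain ⟨cL, hcL⟩ := herg.toPreErgodic.ae_eq_const_of_ae_eq_comp hLmeas (funext hLinv)
  obtain ⟨cl, hcl⟩ := herg.toPreErgodic.ae_eq_const_of_ae_eq_comp hlmeas (funext hlinv)
  -- claim 1 : cL ≤ I
  have claim1 : cL ≤ I := by
    by_contra hcon
    push_neg at hcon
    set ε := cL - I with hε
    have hεpos : 0 < ε := by simp only [hε]; linarith
    set h : X → ℝ := fun y => g y - (I + ε/2) with hh
    have hhmeas : Measurable h := hg.sub measurable_const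
    have hhbound : ∀ y, |h y| ≤ C + |I + ε/2| := fun y =>
      le_trans (abs_sub _ _) (add_le_add_left (hC y) _)
    have hmax := maximal_ergodic e hpres hhmeas hhbound
    have hae : ∀ᵐ x ∂μ, x ∈ {x | ∃ n, 0 < bS (⇑e) h n x} := by
      filter_upwards [hcL] with x hx
      have hlim : I + ε/2 < limsup (fun n : ℕ => bS (⇑e) g n x / n) atTop := by
        have : L x = cL := hx
        rw [hL] at this
        simp only [] at this
        rw [this]
        simp only [hε]
        linarith
      have hfreq : ∃ᶠ n in atTop, I + ε/2 < bS (⇑e) g n x / n :=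
        frequently_lt_of_lt_limsup ((isBdd_ge (hub x)).isCoboundedUnder_le) hlim
      obtain ⟨n, hn1, hnval⟩ := (eventually_ge_atTop 1).and_frequently hfreq |>.exists
      refine ⟨n, ?_⟩
      have hnpos : (0:ℝ) < n := by exact_mod_cast hn1
      rw [hh, bS_sub_const]
      have := (lt_div_iff₀ hnpos).mp hnval
      nlinarith
    have hres : μ.restrict {x | ∃ n, 0 < bS (⇑e) h n x} = μ :=
      Measure.restrict_eq_self_of_ae_mem hae
    rw [hres] at hmax
    have hinth : ∫ x, h x ∂μ = -(ε/2) := by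
      rw [hh]
      rw [integral_sub hgint (integrable_const _), integral_const]
      simp only [probReal_univ, one_smul]
      rw [← hI]
      ring
    rw [hinth] at hmax
    linarith
  -- claim 2 : I ≤ cl
  have claim2 : I ≤ cl := by
    by_contra hcon
    push_neg at hcon
    set ε := I - cl with hε
    have hεpos : 0 < ε := by simp only [hε]; linarith
    set h : X → ℝ := fun y => (I - ε/2) - g y with hh
    have hhmeas : Measurable h := measurable_const.sub hg
    have hhbound : ∀ y, |h y| ≤ |I - ε/2| + C := fun y =>
      le_trans (abs_sub _ _) (add_le_add_right (hC y) _)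
    have hmax := maximal_ergodic e hpres hhmeas hhbound
    have hae : ∀ᵐ x ∂μ, x ∈ {x | ∃ n, 0 < bS (⇑e) h n x} := by
      filter_upwards [hcl] with x hx
      have hlim : liminf (fun n : ℕ => bS (⇑e) g n x / n) atTop < I - ε/2 := by
        have : l x = cl := hx
        rw [hl] at this
        simp only [] at this
        rw [this]
        simp only [hε]
        linarith
      have hfreq : ∃ᶠ n in atTop, bS (⇑e) g n x / n < I - ε/2 :=
        frequently_lt_of_liminf_lt ((isBdd_le (hub x)).isCoboundedUnder_ge) hlim
      obtain ⟨n, hn1, hnval⟩ := (eventually_ge_atTop 1).and_frequently hfreq |>.exists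
      refine ⟨n, ?_⟩
      have hnpos : (0:ℝ) < n := by exact_mod_cast hn1
      rw [hh, bS_const_sub]
      have := (div_lt_iff₀ hnpos).mp hnval
      nlinarith
    have hres : μ.restrict {x | ∃ n, 0 < bS (⇑e) h n x} = μ :=
      Measure.restrict_eq_self_of_ae_mem hae
    rw [hres] at hmax
    have hinth : ∫ x, h x ∂μ = -(ε/2) := by
      rw [hh]
      rw [integral_sub (integrable_const _) hgint, integral_const]
      simp only [probReal_univ, one_smul]
      rw [← hI]
      ring
    rw [hinth] at hmax
    linarith
  -- liminf ≤ limsup gives cl ≤ cL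
  have hclcL : cl ≤ cL := by
    obtain ⟨x₀, hx1, hx2⟩ := (hcL.and hcl).exists
    have hle : l x₀ ≤ L x₀ := liminf_le_limsup (isBdd_le (hub x₀)) (isBdd_ge (hub x₀))
    rw [hx1, hx2] at hle
    exact hle
  have hclI : cl = I := le_antisymm (le_trans hclcL claim1) claim2
  have hcLI : cL = I := le_antisymm claim1 (le_trans claim2 hclcL)
  filter_upwards [hcL, hcl] with x h1 h2
  refine tendsto_of_liminf_eq_limsup ?_ ?_ (isBdd_le (hub x)) (isBdd_ge (hub x))
  · have : l x = cl := h2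
    rw [hl] at this
    simp only [] at this
    rw [this, hclI]
  · have : L x = cL := h1
    rw [hL] at this
    simp only [] at this
    rw [this, hcLI]
end Birkhoff
section Pointwise

lemma ceil_mul_tendsto {γ : ℝ} (hγ : 0 < γ) :
    Tendsto (fun m : ℕ => ⌈γ * (m:ℝ)⌉₊) atTop atTop := by
  rw [tendsto_atTop]
  intro b
  have : ∀ᶠ m : ℕ in atTop, ((b:ℝ)/γ) ≤ (m:ℝ) :=
    tendsto_natCast_atTop_atTop.eventually_ge_atTop _
  filter_upwards [this] with m hm
  have h1 : (b:ℝ) ≤ γ * m := by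
    rw [div_le_iff₀ hγ] at hm
    linarith [hm]
  exact_mod_cast h1.trans (Nat.le_ceil _)

lemma ceil_mul_ratio {γ : ℝ} (hγ : 0 < γ) :
    Tendsto (fun m : ℕ => ((⌈γ * (m:ℝ)⌉₊ : ℕ) : ℝ) / m) atTop (𝓝 γ) := by
  have hlow : ∀ᶠ m : ℕ in atTop, γ ≤ ((⌈γ * (m:ℝ)⌉₊ : ℕ) : ℝ) / m := by
    filter_upwards [eventually_ge_atTop 1] with m hm
    have hmpos : (0:ℝ) < m := by exact_mod_cast hm
    rw [le_div_iff₀ hmpos]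
    calc γ * m ≤ ((⌈γ * (m:ℝ)⌉₊ : ℕ) : ℝ) := Nat.le_ceil _
      _ = _ := by ring_nf
  have hhigh : ∀ᶠ m : ℕ in atTop, ((⌈γ * (m:ℝ)⌉₊ : ℕ) : ℝ) / m ≤ γ + 1/m := by
    filter_upwards [eventually_ge_atTop 1] with m hm
    have hmpos : (0:ℝ) < m := by exact_mod_cast hm
    rw [div_le_iff₀ hmpos]
    have := Nat.ceil_lt_add_one (a := γ * (m:ℝ)) (by positivity)
    calc ((⌈γ * (m:ℝ)⌉₊ : ℕ) : ℝ) ≤ γ * m + 1 := le_of_lt this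
      _ = (γ + 1/m) * m := by field_simp
  have hlim : Tendsto (fun m : ℕ => γ + 1/(m:ℝ)) atTop (𝓝 γ) := by
    have := tendsto_const_div_atTop_nhds_zero_nat (1:ℝ)
    have h2 := tendsto_const_nhds (α := ℕ) (f := atTop) (x := γ) |>.add this
    simpa using h2
  exact tendsto_of_tendsto_of_tendsto_of_le_of_le' tendsto_const_nhds hlim hlow hhigh

open Finset in
open scoped Classical in
lemma count_split (P : ℕ → Prop) {t₁ t₂ : ℕ} (h : t₁ ≤ t₂) :
    ((Finset.range t₂).filter P).card
      = ((Finset.range t₁).filter P).card + ((Finset.Ico t₁ t₂).filter P).card := by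
  rw [Finset.range_eq_Ico, ← Finset.Ico_union_Ico_eq_Ico (Nat.zero_le t₁) h,
    Finset.filter_union, Finset.card_union_of_disjoint
      ((Finset.Ico_disjoint_Ico_consecutive 0 t₁ t₂).mono
        (Finset.filter_subset _ _) (Finset.filter_subset _ _)), ← Finset.range_eq_Ico]

open Finset in
open scoped Classical in
set_option maxHeartbeats 1000000 in
theorem pointwise_core (b : ℤ → ℝ) (v : ℕ → Prop)
    (q : ℤ) (N : ℕ) (Mr : ℝ) (hMr : 1 ≤ Mr)
    (α : ℝ) (hα : 0 < α)
    (hyp1 : Tendsto (fun n : ℕ =>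
      (((Finset.range n).filter v).card : ℝ) / n) atTop (𝓝 α))
    (hypR : ∀ j : ℕ, v j → ∀ nn : ℕ, N ≤ nn →
      |b ((j:ℤ) - nn) - b ((j:ℤ) + nn + q)| ≤ Mr * nn)
    (p : ℕ → ℝ)
    (hyp2 : ∀ L : ℕ, Tendsto (fun n : ℕ =>
      (((Finset.range n).filter (fun s : ℕ => (L:ℝ) ≤ |b (s:ℤ)|)).card : ℝ) / n)
        atTop (𝓝 (p L)))
    (hyp3 : Tendsto p atTop (𝓝 0)) :
    Tendsto (fun m : ℕ => b m / m) atTop (𝓝 0) := by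
  rw [NormedAddCommGroup.tendsto_nhds_zero]
  intro ε hε
  obtain ⟨c, hc0, hc1, hcε⟩ : ∃ c : ℝ, 0 < c ∧ c ≤ 1 ∧ c ≤ ε :=
    ⟨min ε 1, lt_min hε one_pos, min_le_right _ _, min_le_left _ _⟩
  suffices hsuff : ∀ᶠ m : ℕ in atTop, |b m| < (c/2) * m by
    filter_upwards [hsuff, eventually_ge_atTop 1] with m h1 h2
    have hmpos : (0:ℝ) < m := by exact_mod_cast h2
    rw [Real.norm_eq_abs, abs_div, abs_of_nonneg (le_of_lt hmpos), div_lt_iff₀ hmpos]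
    calc |b m| < (c/2) * m := h1
      _ ≤ ε * m := by nlinarith
  by_contra hcon
  have hfreq : ∃ᶠ m : ℕ in atTop, (c/2) * m ≤ |b m| := by
    rw [Filter.not_eventually] at hcon
    exact hcon.mono fun m hm => not_lt.mp hm
  -- constants
  have hMr0 : (0:ℝ) < Mr := lt_of_lt_of_le one_pos hMr
  obtain ⟨β, hβdef⟩ : ∃ β : ℝ, β = c / (8 * Mr) := ⟨_, rfl⟩
  have hβ0 : 0 < β := by rw [hβdef]; positivity
  have hβ8 : β ≤ 1/8 := by
    rw [hβdef, div_le_iff₀ (by positivity)]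
    nlinarith
  have hαβ : 0 < α * β := by positivity
  -- choose the level L
  have hLex : ∀ᶠ L : ℕ in atTop, p L < α * β / 8 := hyp3.eventually_lt_const (by positivity)
  obtain ⟨L, hL⟩ := hLex.exists
  -- window endpoints
  set t1 : ℕ → ℕ := fun m => ⌈(1 - 2*β) * (m:ℝ)⌉₊ with ht1def
  set t2 : ℕ → ℕ := fun m => ⌈(1 - β) * (m:ℝ)⌉₊ with ht2def
  have hγ1 : (0:ℝ) < 1 - 2*β := by linarith
  have hγ2 : (0:ℝ) < 1 - β := by linarith
  -- visit counts along windows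
  have hcv : ∀ {γ : ℝ}, 0 < γ → Tendsto (fun m : ℕ =>
      (((Finset.range (⌈γ * (m:ℝ)⌉₊)).filter v).card : ℝ) / m) atTop (𝓝 (α * γ)) := by
    intro γ hγ
    have h1 : Tendsto (fun m : ℕ =>
        (((Finset.range (⌈γ * (m:ℝ)⌉₊)).filter v).card : ℝ) / (⌈γ * (m:ℝ)⌉₊ : ℕ))
        atTop (𝓝 α) := hyp1.comp (ceil_mul_tendsto hγ)
    have h2 := h1.mul (ceil_mul_ratio hγ)
    refine h2.congr fun m => ?_
    rcases Nat.eq_zero_or_pos (⌈γ * (m:ℝ)⌉₊) with hz | hpos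
    · rw [hz]; simp
    · have hne : ((⌈γ * (m:ℝ)⌉₊ : ℕ) : ℝ) ≠ 0 := by
        exact_mod_cast Nat.pos_iff_ne_zero.mp hpos
      field_simp
  have hA : ∀ᶠ m : ℕ in atTop,
      α * β / 2 * m ≤ (((Finset.range (t2 m)).filter v).card : ℝ)
        - (((Finset.range (t1 m)).filter v).card : ℝ) := by
    have hdiff : Tendsto (fun m : ℕ =>
        ((((Finset.range (t2 m)).filter v).card : ℝ)
          - (((Finset.range (t1 m)).filter v).card : ℝ)) / m) atTop (𝓝 (α * β)) := by
      have := (hcv hγ2).sub (hcv hγ1)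
      have heq : α * (1 - β) - α * (1 - 2*β) = α * β := by ring
      rw [heq] at this
      refine this.congr fun m => ?_
      rw [sub_div]
    have := hdiff.eventually_const_lt (show α * β / 2 < α * β by linarith)
    filter_upwards [this, eventually_ge_atTop 1] with m hm hm1
    have hmpos : (0:ℝ) < m := by exact_mod_cast hm1
    rw [lt_div_iff₀ hmpos] at hm
    linarith
  have hB : ∀ᶠ m : ℕ in atTop,
      (((Finset.range (m+1)).filter (fun s : ℕ => (L:ℝ) ≤ |b (s:ℤ)|)).card : ℝ)
        ≤ α * β / 8 * ((m:ℝ) + 1) := by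
    have h1 := (hyp2 L).comp (tendsto_add_atTop_nat 1)
    have h2 := h1.eventually_lt_const hL
    filter_upwards [h2] with m hm
    simp only [Function.comp] at hm
    have hmpos : (0:ℝ) < ((m+1 : ℕ):ℝ) := by positivity
    rw [div_lt_iff₀ hmpos] at hm
    push_cast at hm ⊢
    linarith
  -- arithmetic thresholds
  have hth1 : ∀ᶠ m : ℕ in atTop, (N:ℝ) + |(q:ℝ)| + 1 ≤ β * m :=
    (tendsto_natCast_atTop_atTop.const_mul_atTop hβ0).eventually_ge_atTop _
  have hth2 : ∀ᶠ m : ℕ in atTop, Mr * |(q:ℝ)| + L ≤ c/8 * m :=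
    (tendsto_natCast_atTop_atTop.const_mul_atTop (by positivity : (0:ℝ) < c/8)).eventually_ge_atTop _
  have hth3 : ∀ᶠ m : ℕ in atTop, 2 * |(q:ℝ)| ≤ (m:ℝ) :=
    tendsto_natCast_atTop_atTop.eventually_ge_atTop _
  obtain ⟨m, hbig, hAm, hBm, h1m, h2m, h3m, hm1⟩ :=
    (hfreq.and_eventually (hA.and (hB.and (hth1.and (hth2.and
      (hth3.and (eventually_ge_atTop 1))))))).exists
  -- fixed m; derive the contradiction
  have hmR : (1:ℝ) ≤ m := by exact_mod_cast hm1
  have hmpos : (0:ℝ) < m := by linarith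
  have ht12 : t1 m ≤ t2 m :=
    Nat.ceil_mono (mul_le_mul_of_nonneg_right (by linarith) (Nat.cast_nonneg m))
  set J := (Finset.Ico (t1 m) (t2 m)).filter v with hJdef
  have hsplit := count_split v ht12
  have hJcard : (J.card : ℝ)
      = (((Finset.range (t2 m)).filter v).card : ℝ)
        - (((Finset.range (t1 m)).filter v).card : ℝ) := by
    rw [hsplit]; push_cast; ring
  have hJge : α * β / 2 * m ≤ (J.card : ℝ) := by rw [hJcard]; exact hAm
  set K := (Finset.range (m+1)).filter (fun s : ℕ => (L:ℝ) ≤ |b (s:ℤ)|) with hKdef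
  have hqabs1 : (q:ℝ) ≤ |(q:ℝ)| := le_abs_self _
  have hqabs2 : -|(q:ℝ)| ≤ (q:ℝ) := neg_abs_le _
  have hjfacts : ∀ j ∈ J, ((2*(j:ℤ) + q - (m:ℤ)).toNat ∈ K
      ∧ (((2*(j:ℤ) + q - (m:ℤ)).toNat : ℤ) = 2*(j:ℤ) + q - (m:ℤ))) := by
    intro j hj
    rw [hJdef, Finset.mem_filter, Finset.mem_Ico] at hj
    obtain ⟨⟨hjt1, hjt2⟩, hv⟩ := hj
    have hjlow : (1 - 2*β) * m ≤ (j:ℝ) :=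
      le_trans (Nat.le_ceil _) (by exact_mod_cast hjt1)
    have hjhigh : (j:ℝ) < (1 - β) * m := by
      have h1 : (j:ℝ) + 1 ≤ (t2 m : ℝ) := by exact_mod_cast hjt2
      have h2 : ((t2 m : ℕ):ℝ) < (1-β) * m + 1 := Nat.ceil_lt_add_one (by positivity)
      linarith
    set nZ : ℤ := (m:ℤ) - j - q with hnZ
    have hnZR : ((nZ:ℤ):ℝ) = (m:ℝ) - j - q := by rw [hnZ]; push_cast; ring
    have hnZN : (N:ℤ) ≤ nZ := by
      have h9 : (N:ℝ) ≤ ((nZ:ℤ):ℝ) := by rw [hnZR]; linarith [h1m, hjhigh, hqabs1]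
      exact_mod_cast h9
    have hnZ0 : (0:ℤ) ≤ nZ := le_trans (by positivity) hnZN
    have hnncast : ((nZ.toNat : ℕ) : ℤ) = nZ := Int.toNat_of_nonneg hnZ0
    have hnnN : N ≤ nZ.toNat := by omega
    have happ := hypR j hv nZ.toNat hnnN
    have hidx : (j:ℤ) + (nZ.toNat:ℤ) + q = (m:ℤ) := by rw [hnncast, hnZ]; ring
    rw [hidx] at happ
    have hsZ : (j:ℤ) - (nZ.toNat:ℤ) = 2*(j:ℤ) + q - (m:ℤ) := by rw [hnncast, hnZ]; ring
    rw [hsZ] at happ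
    have hnnR : ((nZ.toNat : ℕ):ℝ) = (m:ℝ) - j - q := by
      rw [show ((nZ.toNat : ℕ):ℝ) = (((nZ.toNat:ℕ):ℤ):ℝ) by push_cast; ring, hnncast, hnZR]
    have hexp : Mr * (2*β*m + |(q:ℝ)|) = c/4 * m + Mr * |(q:ℝ)| := by
      rw [hβdef]; field_simp; ring
    have hMM : Mr * ((nZ.toNat : ℕ):ℝ) ≤ c/4 * m + Mr * |(q:ℝ)| := by
      have hup : ((nZ.toNat : ℕ):ℝ) ≤ 2*β*m + |(q:ℝ)| := by rw [hnnR]; linarith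
      have h10 := mul_le_mul_of_nonneg_left hup (le_of_lt hMr0)
      rw [hexp] at h10
      exact h10
    have htri : |b (m:ℤ)| - |b (2*(j:ℤ) + q - (m:ℤ))|
        ≤ |b (2*(j:ℤ) + q - (m:ℤ)) - b (m:ℤ)| := by
      rw [abs_sub_comm]; exact abs_sub_abs_le_abs_sub _ _
    have hval : (L:ℝ) ≤ |b (2*(j:ℤ) + q - (m:ℤ))| := by
      have hb1 : c/2 * m ≤ |b (m:ℤ)| := hbig
      have hc8 : (0:ℝ) ≤ c/8 * m := by positivity
      linarith [happ, htri, hMM, h2m]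
    have hhalf : (1/2:ℝ) * m ≤ (1 - 4*β) * m :=
      mul_le_mul_of_nonneg_right (by linarith) (le_of_lt hmpos)
    have hβm0 : (0:ℝ) ≤ β * m := by positivity
    have hs0R : (0:ℝ) ≤ 2*(j:ℝ) + q - m := by nlinarith [hjlow, hqabs2, h3m, hhalf]
    have hsmR : 2*(j:ℝ) + q - m ≤ m := by nlinarith [hjhigh, hqabs1, h1m, hβm0]
    have hs0 : (0:ℤ) ≤ 2*(j:ℤ) + q - (m:ℤ) := by
      have h9 : (0:ℝ) ≤ (((2*(j:ℤ) + q - (m:ℤ)) : ℤ) : ℝ) := by push_cast; linarith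
      exact_mod_cast h9
    have hsm : 2*(j:ℤ) + q - (m:ℤ) ≤ (m:ℤ) := by
      have h9 : (((2*(j:ℤ) + q - (m:ℤ)) : ℤ) : ℝ) ≤ ((m:ℤ):ℝ) := by push_cast; linarith
      exact_mod_cast h9
    have hscast : (((2*(j:ℤ) + q - (m:ℤ)).toNat : ℕ) : ℤ) = 2*(j:ℤ) + q - (m:ℤ) :=
      Int.toNat_of_nonneg hs0
    refine ⟨?_, hscast⟩
    rw [hKdef, Finset.mem_filter, Finset.mem_range]
    constructor
    · omega
    · rw [hscast]; exact hval
  have hinj : Set.InjOn (fun j : ℕ => (2*(j:ℤ) + q - (m:ℤ)).toNat) J := by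
    intro j hj j' hj' hEq
    have h1 := (hjfacts j hj).2
    have h2 := (hjfacts j' hj').2
    simp only at hEq
    rw [hEq] at h1
    omega
  have hcard := Finset.card_le_card_of_injOn _ (fun j hj => (hjfacts j hj).1) hinj
  have hJle : (J.card : ℝ) ≤ (K.card : ℝ) := by exact_mod_cast hcard
  have hfin : α * β / 2 * m ≤ α * β / 8 * ((m:ℝ)+1) := le_trans hJge (le_trans hJle hBm)
  nlinarith [hαβ, hmR]

end Pointwise
open scoped Classical in
set_option maxHeartbeats 1000000 in
theorem proposition2_residual_difference
    {X : Type*} [MeasurableSpace X] (μ : Measure X) [IsProbabilityMeasure μ]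
    (T : Equiv.Perm X) (hTmeas : Measurable (⇑T)) (hTmeas' : Measurable (⇑T.symm))
    (hT : Ergodic (⇑T) μ)
    (f : X → ℝ) (hf : Measurable f) (q : ℤ)
    (hpos : 0 < μ {x | limsup (fun n : ℕ =>
      ((|f ((T⁻¹ ^ n) x) - f ((T ^ ((n : ℤ) + q)) x)| / (n : ℝ) : ℝ) : EReal)) atTop < ⊤}) :
    ∀ᵐ x ∂μ, Tendsto (fun n : ℕ => f ((T ^ n) x) / (n : ℝ)) atTop (𝓝 0) := by
  -- the measurable equivalence
  set e : X ≃ᵐ X :=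
    { toEquiv := T, measurable_toFun := hTmeas, measurable_invFun := hTmeas' } with he
  have hpres : MeasurePreserving (⇑e) μ μ := hT.toMeasurePreserving
  have herg : Ergodic (⇑e) μ := hT
  -- measurability of powers
  have hmeaspow : ∀ k : ℕ, Measurable (⇑(T ^ k)) := by
    intro k; rw [Equiv.Perm.coe_pow]; exact hTmeas.iterate k
  have hmeasinvpow : ∀ k : ℕ, Measurable (⇑(T⁻¹ ^ k)) := by
    intro k; rw [Equiv.Perm.coe_pow]
    have h1 : ⇑(T⁻¹) = ⇑(T.symm) := by rw [Equiv.Perm.inv_def]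
    rw [h1]; exact hTmeas'.iterate k
  have hmeaszpow : ∀ k : ℤ, Measurable (⇑(T ^ k)) := by
    intro k
    cases k with
    | ofNat n =>
        have : ((Int.ofNat n : ℤ)) = (n : ℤ) := rfl
        rw [this, zpow_natCast]; exact hmeaspow n
    | negSucc n => rw [zpow_negSucc, ← inv_pow]; exact hmeasinvpow (n+1)
  -- group-theoretic identities
  have hcompz : ∀ (a c : ℤ) (y : X), (T ^ a) ((T ^ c) y) = (T ^ (a + c)) y := by
    intro a c y
    rw [zpow_add, Equiv.Perm.mul_apply]
  have hinvpow : ∀ n : ℕ, (T⁻¹ ^ n : Equiv.Perm X) = T ^ (-(n:ℤ)) := by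
    intro n
    rw [inv_pow, ← zpow_natCast T n, ← zpow_neg]
  -- the candidate sets
  have hAmeas : ∀ Mc Nc : ℕ, MeasurableSet {y : X | ∀ n : ℕ, Nc ≤ n →
      |f ((T⁻¹ ^ n) y) - f ((T ^ ((n : ℤ) + q)) y)| ≤ ((Mc:ℝ)+1) * n} := by
    intro Mc Nc
    have hrw : {y : X | ∀ n : ℕ, Nc ≤ n →
        |f ((T⁻¹ ^ n) y) - f ((T ^ ((n : ℤ) + q)) y)| ≤ ((Mc:ℝ)+1) * n}
        = ⋂ (n : ℕ), ⋂ (_ : Nc ≤ n),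
          {y : X | |f ((T⁻¹ ^ n) y) - f ((T ^ ((n : ℤ) + q)) y)| ≤ ((Mc:ℝ)+1) * n} := by
      ext y; simp [Set.mem_iInter]
    rw [hrw]
    refine MeasurableSet.iInter fun n => MeasurableSet.iInter fun _ => ?_
    exact measurableSet_le ((hf.comp (hmeasinvpow n)).sub (hf.comp (hmeaszpow _))).abs
      measurable_const
  -- extraction of a positive measure set with uniform bounds
  have hincl : {x | limsup (fun n : ℕ =>
      ((|f ((T⁻¹ ^ n) x) - f ((T ^ ((n : ℤ) + q)) x)| / (n : ℝ) : ℝ) : EReal)) atTop < ⊤}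
      ⊆ ⋃ (Mc : ℕ), ⋃ (Nc : ℕ), {y : X | ∀ n : ℕ, Nc ≤ n →
        |f ((T⁻¹ ^ n) y) - f ((T ^ ((n : ℤ) + q)) y)| ≤ ((Mc:ℝ)+1) * n} := by
    intro y hy
    simp only [Set.mem_setOf_eq] at hy
    obtain ⟨r, hr1, _hr2⟩ := EReal.exists_between_coe_real hy
    obtain ⟨Mc, hMc⟩ := exists_nat_gt r
    have hev : ∀ᶠ n : ℕ in atTop,
        ((|f ((T⁻¹ ^ n) y) - f ((T ^ ((n : ℤ) + q)) y)| / (n : ℝ) : ℝ) : EReal)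
          < (((Mc:ℝ)) : EReal) := by
      refine eventually_lt_of_limsup_lt (lt_of_lt_of_le hr1 ?_)
      exact_mod_cast le_of_lt hMc
    obtain ⟨Nc, hNc⟩ := eventually_atTop.mp hev
    refine Set.mem_iUnion.mpr ⟨Mc, Set.mem_iUnion.mpr ⟨max Nc 1, ?_⟩⟩
    intro n hn
    have hn1 : 1 ≤ n := le_trans (le_max_right _ _) hn
    have hnN : Nc ≤ n := le_trans (le_max_left _ _) hn
    have h3 := hNc n hnN
    rw [EReal.coe_lt_coe_iff] at h3
    have hnpos : (0:ℝ) < n := by exact_mod_cast hn1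
    rw [div_lt_iff₀ hnpos] at h3
    nlinarith [h3, hnpos]
  have hposU : 0 < μ (⋃ (Mc : ℕ), ⋃ (Nc : ℕ), {y : X | ∀ n : ℕ, Nc ≤ n →
      |f ((T⁻¹ ^ n) y) - f ((T ^ ((n : ℤ) + q)) y)| ≤ ((Mc:ℝ)+1) * n}) :=
    lt_of_lt_of_le hpos (measure_mono hincl)
  have hexMN : ∃ Mc Nc : ℕ, 0 < μ {y : X | ∀ n : ℕ, Nc ≤ n →
      |f ((T⁻¹ ^ n) y) - f ((T ^ ((n : ℤ) + q)) y)| ≤ ((Mc:ℝ)+1) * n} := by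
    by_contra hcon
    push_neg at hcon
    have hz : μ (⋃ (Mc : ℕ), ⋃ (Nc : ℕ), {y : X | ∀ n : ℕ, Nc ≤ n →
        |f ((T⁻¹ ^ n) y) - f ((T ^ ((n : ℤ) + q)) y)| ≤ ((Mc:ℝ)+1) * n}) = 0 :=
      measure_iUnion_null fun Mc => measure_iUnion_null fun Nc =>
        le_antisymm (hcon Mc Nc) (by positivity)
    rw [hz] at hposU
    exact lt_irrefl _ hposU
  obtain ⟨Mc, Nc, hMN⟩ := hexMN
  set Aset : Set X := {y : X | ∀ n : ℕ, Nc ≤ n →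
    |f ((T⁻¹ ^ n) y) - f ((T ^ ((n : ℤ) + q)) y)| ≤ ((Mc:ℝ)+1) * n} with hAset
  have hAsetMeas : MeasurableSet Aset := hAmeas Mc Nc
  set α : ℝ := (μ Aset).toReal with hα'
  have hα : 0 < α := ENNReal.toReal_pos (ne_of_gt hMN) (measure_ne_top μ _)
  -- indicator functions
  have hindmeas : ∀ (B : Set X), MeasurableSet B → Measurable (B.indicator (1 : X → ℝ)) :=
    fun B hB => measurable_const.indicator hB
  have hindbd : ∀ (B : Set X) (x : X), |B.indicator (1 : X → ℝ) x| ≤ 1 := by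
    intro B x
    by_cases h : x ∈ B <;> simp [Set.indicator_apply, h]
  have hiter : ∀ (k : ℕ) (x : X), (⇑e)^[k] x = (T ^ (k:ℤ)) x := by
    intro k x
    rw [zpow_natCast, Equiv.Perm.coe_pow]
    rfl
  have hcards : ∀ (B : Set X) (x : X) (n : ℕ), bS (⇑e) (B.indicator (1 : X → ℝ)) n x
      = (((Finset.range n).filter (fun k : ℕ => (T ^ (k:ℤ)) x ∈ B)).card : ℝ) := by
    intro B x n
    rw [bS, ← Finset.sum_boole]
    refine Finset.sum_congr rfl fun k _ => ?_
    rw [hiter k x, Set.indicator_apply]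
    split_ifs <;> simp
  -- Birkhoff: frequency of visits to Aset
  have hbk1 : ∀ᵐ x ∂μ, Tendsto (fun n : ℕ =>
      (((Finset.range n).filter (fun k : ℕ => (T ^ (k:ℤ)) x ∈ Aset)).card : ℝ) / n)
      atTop (𝓝 α) := by
    have h0 := birkhoff_bdd e hpres herg (hindmeas Aset hAsetMeas) (C := 1) (hindbd Aset)
    have hint : ∫ x, Aset.indicator (1 : X → ℝ) x ∂μ = α := by
      rw [integral_indicator_one hAsetMeas]; rfl
    rw [hint] at h0
    filter_upwards [h0] with x hx
    refine hx.congr fun n => ?_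
    rw [hcards]
  -- level sets
  set B : ℕ → Set X := fun L => {y : X | (L:ℝ) ≤ |f y|} with hB
  have hBmeas : ∀ L, MeasurableSet (B L) := fun L =>
    measurableSet_le measurable_const hf.abs
  set p : ℕ → ℝ := fun L => (μ (B L)).toReal with hp
  have hbk2 : ∀ᵐ x ∂μ, ∀ L : ℕ, Tendsto (fun n : ℕ =>
      (((Finset.range n).filter (fun s : ℕ => (L:ℝ) ≤ |f ((T ^ (s:ℤ)) x)|)).card : ℝ) / n)
      atTop (𝓝 (p L)) := by
    rw [ae_all_iff]
    intro L
    have h0 := birkhoff_bdd e hpres herg (hindmeas (B L) (hBmeas L)) (C := 1) (hindbd (B L))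
    have hint : ∫ x, (B L).indicator (1 : X → ℝ) x ∂μ = p L := by
      rw [integral_indicator_one (hBmeas L)]; rfl
    rw [hint] at h0
    filter_upwards [h0] with x hx
    refine hx.congr fun n => ?_
    rw [hcards]
    simp only [hB, Set.mem_setOf_eq]
  have hyp3 : Tendsto p atTop (𝓝 0) := by
    have hanti : Antitone B := by
      intro L L' h y hy
      simp only [hB, Set.mem_setOf_eq] at hy ⊢
      have hLL : (L:ℝ) ≤ (L':ℝ) := by exact_mod_cast h
      linarith
    have hempty : (⋂ L, B L) = ∅ := by
      ext y
      simp only [Set.mem_iInter, hB, Set.mem_setOf_eq, Set.mem_empty_iff_false, iff_false]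
      push_neg
      obtain ⟨L, hL⟩ := exists_nat_gt |f y|
      exact ⟨L, hL⟩
    have hμt : Tendsto (μ ∘ B) atTop (𝓝 (μ (⋂ L, B L))) :=
      tendsto_measure_iInter_atTop (fun L => (hBmeas L).nullMeasurableSet) hanti
        ⟨0, measure_ne_top μ _⟩
    rw [hempty, measure_empty] at hμt
    have hfin := (ENNReal.tendsto_toReal (by simp : (0:ENNReal) ≠ ⊤)).comp hμt
    rw [ENNReal.toReal_zero] at hfin
    exact hfin
  -- the reflection property
  have hypR : ∀ x : X, ∀ j : ℕ, (T ^ (j:ℤ)) x ∈ Aset → ∀ nn : ℕ, Nc ≤ nn →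
      |f ((T ^ ((j:ℤ) - nn)) x) - f ((T ^ ((j:ℤ) + nn + q)) x)| ≤ ((Mc:ℝ)+1) * nn := by
    intro x j hj nn hnn
    have h1 := hj nn hnn
    have e1 : (T⁻¹ ^ nn) ((T ^ (j:ℤ)) x) = (T ^ ((j:ℤ) - nn)) x := by
      rw [hinvpow nn, hcompz]
      congr 1
      ring_nf
    have e2 : (T ^ ((nn:ℤ) + q)) ((T ^ (j:ℤ)) x) = (T ^ ((j:ℤ) + nn + q)) x := by
      rw [hcompz]
      congr 1
      ring
    rw [e1, e2] at h1
    exact h1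
  -- put everything together
  filter_upwards [hbk1, hbk2] with x hx1 hx2
  have hMr1 : (1:ℝ) ≤ (Mc:ℝ)+1 := by
    have : (0:ℝ) ≤ (Mc:ℝ) := Nat.cast_nonneg _
    linarith
  have hcore := pointwise_core (fun s : ℤ => f ((T ^ s) x))
    (fun j : ℕ => (T ^ (j:ℤ)) x ∈ Aset) q Nc ((Mc:ℝ)+1) hMr1 α hα hx1
    (hypR x) p hx2 hyp3
  refine hcore.congr fun m => ?_
  simp only [zpow_natCast]
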